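/- Let X ⊆ C_n = ⟨x⟩ and let U_X = X ⊎ X^{(−1)} (multiset union). The dihedrant Dih(n,X,X) = Cay(D_n, X ∪ Xτ) is a directed strongly regular graph with parameters (2n, 2|X|, μ, λ, t) if and only if t = μ and X̄·U̅_X = (λ−μ)X̄ + μ·C̄_n in Z[C_n]. -/

import Mathlib

open scoped Classical

noncomputable def adjMat {V : Type*} [Fintype V] (r : V → V → Prop) : Matrix V V ℤ :=
  Matrix.of fun i j => if r i j then 1 else 0

noncomputable def allOnes (V : Type*) [Fintype V] : Matrix V V ℤ :=
  Matrix.of fun _ _ => 1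

/-- `r` is (the adjacency relation of) a directed strongly regular graph with
parameters `(n, k, μ, lam, t)`. -/
def IsDSRG {V : Type*} [Fintype V] [DecidableEq V] (r : V → V → Prop)
    (n k μ lam t : ℤ) : Prop :=
  (∀ i, ¬ r i i) ∧ ((Fintype.card V : ℤ) = n) ∧
  allOnes V * adjMat r = k • allOnes V ∧
  adjMat r * allOnes V = k • allOnes V ∧
  adjMat r * adjMat r =
    t • (1 : Matrix V V ℤ) + lam • adjMat r + μ • (allOnes V - 1 - adjMat r)

/-- The Cayley digraph relation of `S ⊆ G`: `g → h` iff `g⁻¹ * h ∈ S`. -/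
def cayleyRel {G : Type*} [Group G] (S : Finset G) : G → G → Prop :=
  fun g h => g⁻¹ * h ∈ S

/-- The connection set `X ∪ Yτ ⊆ D_n`, with `C_n` realized additively as `ZMod n`,
`x^a` as `DihedralGroup.r a` and `τ = DihedralGroup.sr 0`. -/
noncomputable def dihSet (n : ℕ) (X Y : Finset (ZMod n)) : Finset (DihedralGroup n) :=
  X.image DihedralGroup.r ∪ Y.image (fun a => DihedralGroup.r a * DihedralGroup.sr 0)

/-- `X̄`, the sum of the elements of `X` in the group ring `ℤ[C_n]`. -/
noncomputable def fbar {n : ℕ} (X : Finset (ZMod n)) : AddMonoidAlgebra ℤ (ZMod n) :=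
  ∑ a ∈ X, AddMonoidAlgebra.single a 1

/-- `X^{(−1)}‾`, the sum of the inverses of the elements of `X` in `ℤ[C_n]`. -/
noncomputable def fbarInv {n : ℕ} (X : Finset (ZMod n)) : AddMonoidAlgebra ℤ (ZMod n) :=
  ∑ a ∈ X, AddMonoidAlgebra.single (-a) 1

/-- `C̄_n`, the sum of all elements of `C_n` in `ℤ[C_n]`. -/
noncomputable def cbar (n : ℕ) [NeZero n] : AddMonoidAlgebra ℤ (ZMod n) :=
  ∑ a : ZMod n, AddMonoidAlgebra.single a 1

/-! ### Auxiliary material -/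

/-- classical `ℤ`-valued indicator of a proposition -/
noncomputable def chi (p : Prop) : ℤ := if p then 1 else 0

lemma chi_congr {p q : Prop} (h : p ↔ q) : chi p = chi q :=
  congrArg chi (propext h)

lemma chi_true {p : Prop} (h : p) : chi p = 1 := by simp [chi, h]

lemma chi_false {p : Prop} (h : ¬ p) : chi p = 0 := by simp [chi, h]

section Aux

open DihedralGroup

variable {n : ℕ}

lemma chi_sum {α : Type*} [DecidableEq α] (X : Finset α) (v : α) :
    (∑ b ∈ X, chi (b = v)) = chi (v ∈ X) := by
  simp only [chi]
  convert Finset.sum_ite_eq' X v (fun _ => (1:ℤ)) using 2 <;> simp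

lemma sum_chi_filter {G : Type*} [Fintype G] (S : Finset G) (f : G → ℤ) :
    ∑ k : G, chi (k ∈ S) * f k = ∑ k ∈ S, f k := by
  simp only [chi, ite_mul, one_mul, zero_mul]
  rw [show (∑ k : G, if k ∈ S then f k else 0) = ∑ k ∈ S, f k from by
    convert Finset.sum_ite_mem Finset.univ S f using 2 <;> simp]

lemma sum_chi_mem {G : Type*} [Fintype G] (S : Finset G) :
    ∑ k : G, chi (k ∈ S) = (S.card : ℤ) := by
  have := sum_chi_filter S (fun _ => (1:ℤ))
  simpa using this

lemma single_apply_chi (a c : ZMod n) : (Finsupp.single a (1:ℤ)) c = chi (a = c) := by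
  rw [Finsupp.single_apply]
  simp [chi]

lemma fbar_apply (X : Finset (ZMod n)) (c : ZMod n) :
    (fbar X).coeff c = chi (c ∈ X) := by
  rw [fbar, AddMonoidAlgebra.coeff_sum, Finsupp.finset_sum_apply, ← chi_sum X c]
  exact Finset.sum_congr rfl fun a _ => single_apply_chi a c

lemma cbar_apply [NeZero n] (c : ZMod n) : (cbar n).coeff c = 1 := by
  rw [cbar, AddMonoidAlgebra.coeff_sum, Finsupp.finset_sum_apply]
  simp only [AddMonoidAlgebra.coeff_single]
  rw [Finset.sum_congr rfl fun a _ => single_apply_chi a c, chi_sum]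
  exact chi_true (Finset.mem_univ c)

lemma shift_sum (X : Finset (ZMod n)) (u c : ZMod n) :
    (∑ b ∈ X, chi (u + b = c)) = chi (c - u ∈ X) := by
  rw [← chi_sum X (c - u)]
  refine Finset.sum_congr rfl fun b _ => chi_congr ?_
  constructor
  · intro h; subst h; abel
  · intro h; subst h; abel

lemma shift_sum' (X : Finset (ZMod n)) (u c : ZMod n) :
    (∑ b ∈ X, chi (u + -b = c)) = chi (u - c ∈ X) := by
  rw [← chi_sum X (u - c)]
  refine Finset.sum_congr rfl fun b _ => chi_congr ?_
  constructor
  · intro h; subst h; abel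
  · intro h; subst h; abel

lemma single_mul_single' (a b : ZMod n) :
    (AddMonoidAlgebra.single a (1:ℤ) : AddMonoidAlgebra ℤ (ZMod n)) * AddMonoidAlgebra.single b 1
      = AddMonoidAlgebra.single (a + b) 1 := by
  have := AddMonoidAlgebra.single_mul_single (R := ℤ) (M := ZMod n) a b (1:ℤ) (1:ℤ)
  rw [mul_one] at this
  exact this

/-- coefficient of the product `X̄·(X̄ + X̄⁻¹)` at `c`. -/
lemma prod_apply' (X : Finset (ZMod n)) (c : ZMod n) :
    (fbar X * (fbar X + fbarInv X)).coeff c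
      = ∑ a ∈ X, (chi (c - a ∈ X) + chi (a - c ∈ X)) := by
  have hexp : fbar X * (fbar X + fbarInv X)
      = ∑ a ∈ X, ∑ b ∈ X, (AddMonoidAlgebra.single (a + b) (1:ℤ) + AddMonoidAlgebra.single (a + -b) 1) := by
    rw [mul_add]
    rw [fbar, fbarInv, Finset.sum_mul_sum, Finset.sum_mul_sum, ← Finset.sum_add_distrib]
    refine Finset.sum_congr rfl fun a _ => ?_
    rw [← Finset.sum_add_distrib]
    refine Finset.sum_congr rfl fun b _ => ?_
    rw [single_mul_single', single_mul_single']
  rw [hexp, AddMonoidAlgebra.coeff_sum, Finsupp.finset_sum_apply]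
  refine Finset.sum_congr rfl fun a _ => ?_
  rw [AddMonoidAlgebra.coeff_sum, Finsupp.finset_sum_apply]
  have : ∀ b : ZMod n, ((AddMonoidAlgebra.single (a + b) (1:ℤ) + AddMonoidAlgebra.single (a + -b) 1) : AddMonoidAlgebra ℤ (ZMod n)).coeff c
      = chi (a + b = c) + chi (a + -b = c) := by
    intro b
    rw [AddMonoidAlgebra.coeff_add, Finsupp.add_apply, AddMonoidAlgebra.coeff_single,
      AddMonoidAlgebra.coeff_single, single_apply_chi, single_apply_chi]
  rw [Finset.sum_congr rfl fun b _ => this b, Finset.sum_add_distrib, shift_sum, shift_sum']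

lemma mem_dihSet_r {X : Finset (ZMod n)} {c : ZMod n} :
    r c ∈ dihSet n X X ↔ c ∈ X := by
  simp [dihSet, r_mul_sr]

lemma mem_dihSet_sr {X : Finset (ZMod n)} {c : ZMod n} :
    sr c ∈ dihSet n X X ↔ -c ∈ X := by
  simp only [dihSet, Finset.mem_union, Finset.mem_image, r_mul_sr]
  constructor
  · rintro (⟨a, _, h⟩ | ⟨a, ha, h⟩)
    · exact absurd h (by simp)
    · rw [sr.injEq] at h
      have : a = -c := by rw [← h]; abel
      rwa [← this]
  · intro h
    exact Or.inr ⟨-c, h, by rw [sr.injEq]; abel⟩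

lemma DG_r_inv (i : ZMod n) : (r i)⁻¹ = r (-i) := rfl

lemma DG_sr_inv (i : ZMod n) : (sr i)⁻¹ = sr i := rfl

lemma dih_inj1 : Function.Injective (r (n := n)) := fun a b h => by
  injection h

lemma dih_inj2 : Function.Injective (fun a : ZMod n => r a * sr 0) := by
  intro a b h
  simp only [r_mul_sr] at h
  injection h with h'
  exact sub_right_injective h'

lemma dih_disj (X Y : Finset (ZMod n)) :
    Disjoint (X.image r) (Y.image fun a => r a * sr 0) := by
  rw [Finset.disjoint_left]
  rintro x hx hy
  simp only [Finset.mem_image, r_mul_sr] at hx hy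
  obtain ⟨a, _, rfl⟩ := hx
  obtain ⟨b, _, hb⟩ := hy
  exact absurd hb (by simp)

lemma card_dihSet (X : Finset (ZMod n)) : (dihSet n X X).card = 2 * X.card := by
  rw [dihSet, Finset.card_union_of_disjoint (dih_disj X X),
      Finset.card_image_of_injective _ dih_inj1,
      Finset.card_image_of_injective _ dih_inj2, two_mul]

lemma dih_sum_split (X : Finset (ZMod n)) (f : DihedralGroup n → ℤ) :
    ∑ k ∈ dihSet n X X, f k
      = ∑ a ∈ X, f (r a) + ∑ a ∈ X, f (r a * sr 0) := by
  rw [dihSet, Finset.sum_union (dih_disj X X),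
      Finset.sum_image (fun a _ b _ h => dih_inj1 h),
      Finset.sum_image (fun a _ b _ h => dih_inj2 h)]

end Aux

section Mat

variable {G : Type*} [Group G] [Fintype G] [DecidableEq G]

lemma adj_apply (S : Finset G) (g h : G) :
    adjMat (cayleyRel S) g h = chi (g⁻¹ * h ∈ S) := rfl

lemma allOnes_apply (g h : G) : allOnes G g h = 1 := rfl

lemma one_entry (g h : G) : ((1 : Matrix G G ℤ) g h) = chi (g⁻¹ * h = 1) := by
  simp [Matrix.one_apply, chi, inv_mul_eq_one]

lemma allOnes_mul_adj (S : Finset G) :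
    allOnes G * adjMat (cayleyRel S) = (S.card : ℤ) • allOnes G := by
  ext i j
  rw [Matrix.mul_apply]
  simp only [adj_apply, allOnes_apply, one_mul, Matrix.smul_apply, smul_eq_mul, mul_one]
  rw [Fintype.sum_equiv (⟨fun k : G => k⁻¹ * j, fun m => (m * j⁻¹)⁻¹,
        fun k => by group, fun m => by group⟩ : G ≃ G)
      (fun k => chi (k⁻¹ * j ∈ S)) (fun m => chi (m ∈ S)) (fun _ => rfl)]
  exact sum_chi_mem S

lemma adj_mul_allOnes (S : Finset G) :
    adjMat (cayleyRel S) * allOnes G = (S.card : ℤ) • allOnes G := by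
  ext i j
  rw [Matrix.mul_apply]
  simp only [adj_apply, allOnes_apply, mul_one, Matrix.smul_apply, smul_eq_mul]
  rw [Fintype.sum_equiv (⟨fun k : G => i⁻¹ * k, fun m => i * m,
        fun k => by group, fun m => by group⟩ : G ≃ G)
      (fun k => chi (i⁻¹ * k ∈ S)) (fun m => chi (m ∈ S)) (fun _ => rfl)]
  exact sum_chi_mem S

lemma AA_entry (S : Finset G) (g h : G) :
    (adjMat (cayleyRel S) * adjMat (cayleyRel S)) g h
      = ∑ k ∈ S, chi (k⁻¹ * (g⁻¹ * h) ∈ S) := by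
  rw [Matrix.mul_apply]
  simp only [adj_apply]
  rw [Fintype.sum_equiv (⟨fun k : G => g⁻¹ * k, fun m => g * m,
        fun k => by group, fun m => by group⟩ : G ≃ G)
      (fun k => chi (g⁻¹ * k ∈ S) * chi (k⁻¹ * h ∈ S))
      (fun m => chi (m ∈ S) * chi (m⁻¹ * (g⁻¹ * h) ∈ S))
      (fun k => by
        simp only [Equiv.coe_fn_mk]
        rw [show (g⁻¹ * k)⁻¹ * (g⁻¹ * h) = k⁻¹ * h by group])]
  exact sum_chi_filter S _

lemma rhs_entry (S : Finset G) (μ lam t : ℤ) (g h : G) :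
    (t • (1 : Matrix G G ℤ) + lam • adjMat (cayleyRel S)
        + μ • (allOnes G - 1 - adjMat (cayleyRel S))) g h
      = t * chi (g⁻¹ * h = 1) + lam * chi (g⁻¹ * h ∈ S)
        + μ * (1 - chi (g⁻¹ * h = 1) - chi (g⁻¹ * h ∈ S)) := by
  simp only [Matrix.add_apply, Matrix.smul_apply, Matrix.sub_apply, smul_eq_mul,
    one_entry, adj_apply, allOnes_apply]

end Mat

/-- `Dih(n,X,X) = Cay(D_n, X ∪ Xτ)` is a DSRG with parameters
`(2n, 2|X|, μ, λ, t)` iff `t = μ` and `X̄·U̅_X = (λ−μ)X̄ + μC̄_n` in `ℤ[C_n]`,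
where `U̅_X = X̄ + X^{(−1)}‾`. -/
theorem dihedrant_XX_isDSRG_iff (n : ℕ) [NeZero n] (X : Finset (ZMod n))
    (h0 : (0 : ZMod n) ∉ X) (μ lam t : ℤ) :
    IsDSRG (cayleyRel (dihSet n X X)) (2 * (n : ℤ)) (2 * (X.card : ℤ)) μ lam t ↔
      (t = μ ∧
       fbar X * (fbar X + fbarInv X) = (lam - μ) • fbar X + μ • cbar n) := by
  set S := dihSet n X X with hS
  set cnt : ZMod n → ℤ := fun c => ∑ a ∈ X, (chi (c - a ∈ X) + chi (a - c ∈ X)) with hcnt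
  -- Step 1: IsDSRG iff the matrix equation
  have c1 : ∀ i : DihedralGroup n, ¬ cayleyRel S i i := by
    intro i hi
    have : (1 : DihedralGroup n) ∈ S := by
      have h' : i⁻¹ * i ∈ S := hi
      rwa [inv_mul_cancel] at h'
    rw [DihedralGroup.one_def, hS, mem_dihSet_r] at this
    exact h0 this
  have hcard : ((Fintype.card (DihedralGroup n) : ℤ) = 2 * (n : ℤ)) := by
    rw [DihedralGroup.card]; push_cast; ring
  have hScard : ((S.card : ℤ)) = 2 * (X.card : ℤ) := by
    rw [hS, card_dihSet]; push_cast; ring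
  have step1 : IsDSRG (cayleyRel S) (2 * (n : ℤ)) (2 * (X.card : ℤ)) μ lam t ↔
      adjMat (cayleyRel S) * adjMat (cayleyRel S) =
        t • (1 : Matrix (DihedralGroup n) (DihedralGroup n) ℤ) + lam • adjMat (cayleyRel S)
          + μ • (allOnes (DihedralGroup n) - 1 - adjMat (cayleyRel S)) := by
    constructor
    · rintro ⟨_, _, _, _, h5⟩; exact h5
    · intro h5
      exact ⟨c1, hcard, by rw [allOnes_mul_adj, hScard], by rw [adj_mul_allOnes, hScard], h5⟩
  -- Step 2: matrix equation iff pointwise equation over the group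
  have step2 : (adjMat (cayleyRel S) * adjMat (cayleyRel S) =
        t • (1 : Matrix (DihedralGroup n) (DihedralGroup n) ℤ) + lam • adjMat (cayleyRel S)
          + μ • (allOnes (DihedralGroup n) - 1 - adjMat (cayleyRel S))) ↔
      ∀ d : DihedralGroup n, (∑ k ∈ S, chi (k⁻¹ * d ∈ S))
        = t * chi (d = 1) + lam * chi (d ∈ S) + μ * (1 - chi (d = 1) - chi (d ∈ S)) := by
    constructor
    · intro hmat d
      have h2 := congrFun (congrFun hmat 1) d
      rw [AA_entry, rhs_entry] at h2
      simpa using h2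
    · intro hd
      ext g h
      rw [AA_entry, rhs_entry]
      exact hd (g⁻¹ * h)
  -- Step 3: compute the sums for d = r c and d = sr c
  have sum_r : ∀ c : ZMod n,
      (∑ k ∈ S, chi (k⁻¹ * DihedralGroup.r c ∈ S)) = cnt c := by
    intro c
    rw [hS, hcnt]
    rw [dih_sum_split X (fun k => chi (k⁻¹ * DihedralGroup.r c ∈ dihSet n X X)),
        ← Finset.sum_add_distrib]
    refine Finset.sum_congr rfl fun a _ => ?_
    have h1 : (DihedralGroup.r a)⁻¹ * DihedralGroup.r c = DihedralGroup.r (c - a) := by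
      rw [DG_r_inv, DihedralGroup.r_mul_r, neg_add_eq_sub]
    have h2 : (DihedralGroup.r a * DihedralGroup.sr 0)⁻¹ * DihedralGroup.r c
        = DihedralGroup.sr (0 - a + c) := by
      rw [DihedralGroup.r_mul_sr, DG_sr_inv, DihedralGroup.sr_mul_r]
    congr 1
    · exact chi_congr (by rw [h1]; exact mem_dihSet_r)
    · refine chi_congr ?_
      rw [h2, mem_dihSet_sr, show -(0 - a + c) = a - c by ring]
  have sum_sr : ∀ c : ZMod n,
      (∑ k ∈ S, chi (k⁻¹ * DihedralGroup.sr c ∈ S)) = cnt (-c) := by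
    intro c
    rw [hS, hcnt]
    rw [dih_sum_split X (fun k => chi (k⁻¹ * DihedralGroup.sr c ∈ dihSet n X X)),
        ← Finset.sum_add_distrib]
    refine Finset.sum_congr rfl fun a _ => ?_
    have h1 : (DihedralGroup.r a)⁻¹ * DihedralGroup.sr c = DihedralGroup.sr (c - -a) := by
      rw [DG_r_inv, DihedralGroup.r_mul_sr]
    have h2 : (DihedralGroup.r a * DihedralGroup.sr 0)⁻¹ * DihedralGroup.sr c
        = DihedralGroup.r (c - (0 - a)) := by
      rw [DihedralGroup.r_mul_sr, DG_sr_inv, DihedralGroup.sr_mul_sr]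
    congr 1
    · refine chi_congr ?_
      rw [h1, mem_dihSet_sr, show -(c - -a) = -c - a by ring]
    · refine chi_congr ?_
      rw [h2, mem_dihSet_r, show c - (0 - a) = a - -c by ring]
  -- Step 4: the group-ring equation, pointwise
  have step4 : (fbar X * (fbar X + fbarInv X) = (lam - μ) • fbar X + μ • cbar n) ↔
      ∀ c : ZMod n, cnt c = (lam - μ) * chi (c ∈ X) + μ := by
    rw [← AddMonoidAlgebra.coeff_inj, Finsupp.ext_iff]
    constructor
    · intro h c
      have hc := h c
      rw [prod_apply'] at hc
      rw [hcnt]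
      rwa [show ((lam - μ) • fbar X + μ • cbar n).coeff c = (lam - μ) * chi (c ∈ X) + μ from by
        rw [AddMonoidAlgebra.coeff_add, Finsupp.add_apply, AddMonoidAlgebra.coeff_smul,
          AddMonoidAlgebra.coeff_smul, Finsupp.smul_apply, Finsupp.smul_apply, fbar_apply, cbar_apply,
          smul_eq_mul, smul_eq_mul, mul_one]] at hc
    · intro h c
      have hc := h c
      rw [hcnt] at hc
      rw [prod_apply']
      rw [show ((lam - μ) • fbar X + μ • cbar n).coeff c = (lam - μ) * chi (c ∈ X) + μ from by
        rw [AddMonoidAlgebra.coeff_add, Finsupp.add_apply, AddMonoidAlgebra.coeff_smul,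
          AddMonoidAlgebra.coeff_smul, Finsupp.smul_apply, Finsupp.smul_apply, fbar_apply, cbar_apply,
          smul_eq_mul, smul_eq_mul, mul_one]]
      exact hc
  -- membership/identity facts
  have memr : ∀ c : ZMod n, (DihedralGroup.r c ∈ S) ↔ c ∈ X := fun c => by
    rw [hS]; exact mem_dihSet_r
  have memsr : ∀ c : ZMod n, (DihedralGroup.sr c ∈ S) ↔ -c ∈ X := fun c => by
    rw [hS]; exact mem_dihSet_sr
  have eqr : ∀ c : ZMod n, (DihedralGroup.r c = 1) ↔ c = 0 := fun c => by
    rw [DihedralGroup.one_def]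
    exact ⟨fun h => by injection h, fun h => by rw [h]⟩
  have eqsr : ∀ c : ZMod n, ¬ (DihedralGroup.sr c = 1) := fun c h => by
    rw [DihedralGroup.one_def] at h
    exact absurd h (fun h' => by cases h')
  -- Combine everything
  rw [step1, step2, step4]
  constructor
  · intro hd
    have hEr : ∀ c : ZMod n, cnt c
        = t * chi (c = 0) + lam * chi (c ∈ X) + μ * (1 - chi (c = 0) - chi (c ∈ X)) := by
      intro c
      have h := hd (DihedralGroup.r c)
      rwa [sum_r, chi_congr (eqr c), chi_congr (memr c)] at h
    have hEs : ∀ c : ZMod n, cnt c = lam * chi (c ∈ X) + μ * (1 - chi (c ∈ X)) := by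
      intro c
      have h := hd (DihedralGroup.sr (-c))
      rw [sum_sr, neg_neg, chi_false (eqsr (-c)), chi_congr (memsr (-c)), neg_neg] at h
      rw [h]; ring
    have ht : t = μ := by
      have h1 := hEr 0
      have h2 := hEs 0
      rw [chi_true rfl, chi_false h0] at h1
      rw [chi_false h0] at h2
      rw [h1] at h2
      linarith
    refine ⟨ht, fun c => ?_⟩
    rw [hEs c]; ring
  · rintro ⟨ht, heq⟩ d
    match d with
    | DihedralGroup.r c =>
      rw [sum_r, heq c, chi_congr (eqr c), chi_congr (memr c)]
      subst ht
      by_cases hc0 : c = 0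
      · subst hc0
        rw [chi_true rfl, chi_false h0]
        ring
      · rw [chi_false hc0]
        ring
    | DihedralGroup.sr c =>
      rw [sum_sr, heq (-c), chi_false (eqsr c), chi_congr (memsr c)]
      ring
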